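/- arXiv:2010.04937 — 2 statements merged into one kernel-verified Lean document; each statement's English description precedes it below -/
import Mathlib

section
/- Let f be L-smooth and γ-quasar-convex with respect to a global minimizer x*, let R ≥ ‖x₀ − x*‖, and run SGD with constant step size 0 < α ≤ 1/(2L). Writing Δ_t = E[f(x_t) − f(x*)], for every t ≥ 0 the one-step inequality (2/γ − 1)Δ_{t+1} − (2/γ − 2)Δ_t ≤ (1/(2γα)) (E‖x_t − x*‖² − E‖x_{t+1} − x*‖²) + σ²α/(2γ(1 − αLγ)) + (1/γ − 1)Lα²σ² holds. -/
open MeasureTheory Finset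
open scoped RealInnerProductSpace

-- descent lemma
lemma descent_lemma {E : Type*} [NormedAddCommGroup E] [InnerProductSpace ℝ E] [CompleteSpace E]
    (f : E → ℝ) (f' : E → E) (L : ℝ) (hL : 0 ≤ L)
    (hgrad : ∀ y, HasGradientAt f (f' y) y)
    (hsmooth : ∀ y z, ‖f' y - f' z‖ ≤ L * ‖y - z‖) (y z : E) :
    f z ≤ f y + ⟪f' y, z - y⟫ + L/2 * ‖z - y‖^2 := by
  have hcf' : Continuous f' := by
    rw [Metric.continuous_iff]
    intro b ε hε
    rcases eq_or_lt_of_le hL with hL0 | hL0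
    · exact ⟨1, one_pos, fun a _ => by
        have := hsmooth a b
        rw [← hL0, zero_mul] at this
        have : f' a = f' b := by
          have := norm_eq_zero.mp (le_antisymm this (norm_nonneg _))
          rwa [sub_eq_zero] at this
        simp [dist_eq_norm, this, hε]⟩
    · refine ⟨ε / L, by positivity, fun a ha => ?_⟩
      rw [dist_eq_norm]
      calc ‖f' a - f' b‖ ≤ L * ‖a - b‖ := hsmooth a b
        _ < L * (ε / L) := by
            apply mul_lt_mul_of_pos_left _ hL0
            rwa [dist_eq_norm] at ha
        _ = ε := by field_simp
  set c : ℝ → E := fun s => y + s • (z - y) with hc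
  have hcd : ∀ s : ℝ, HasDerivAt c (z - y) s := fun s => by
    simpa [hc] using ((hasDerivAt_id s).smul_const (z - y)).const_add y
  set φ' : ℝ → ℝ := fun s => ⟪f' (c s), z - y⟫ with hφ'
  have hφd : ∀ s : ℝ, HasDerivAt (fun s => f (c s)) (φ' s) s := by
    intro s
    have hf : HasFDerivAt f (InnerProductSpace.toDual ℝ E (f' (c s))) (c s) :=
      hasGradientAt_iff_hasFDerivAt.mp (hgrad (c s))
    exact (hf.comp_hasDerivAt s (hcd s))
  have hφc : Continuous φ' := by
    apply Continuous.inner (hcf'.comp (by continuity)) continuous_const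
  have key : f z - f y = ∫ s in (0:ℝ)..1, φ' s := by
    have := intervalIntegral.integral_eq_sub_of_hasDerivAt
      (f := fun s => f (c s)) (f' := φ') (a := 0) (b := 1)
      (fun s _ => hφd s) (hφc.intervalIntegrable 0 1)
    simp only [hc] at this
    simp at this
    rw [this]
  have hbound : ∀ s ∈ Set.Icc (0:ℝ) 1, φ' s ≤ ⟪f' y, z - y⟫ + s * (L * ‖z - y‖^2) := by
    rintro s ⟨hs0, _⟩
    have h1 : φ' s - ⟪f' y, z - y⟫ = ⟪f' (c s) - f' y, z - y⟫ := by
      rw [inner_sub_left]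
    have h2 : ⟪f' (c s) - f' y, z - y⟫ ≤ ‖f' (c s) - f' y‖ * ‖z - y‖ :=
      real_inner_le_norm _ _
    have h3 : ‖f' (c s) - f' y‖ ≤ L * (s * ‖z - y‖) := by
      have := hsmooth (c s) y
      simpa [hc, norm_smul, abs_of_nonneg hs0] using this
    nlinarith [norm_nonneg (z - y), sq_nonneg (‖z-y‖)]
  have hI : ∫ s in (0:ℝ)..1, φ' s ≤ ∫ s in (0:ℝ)..1, (⟪f' y, z - y⟫ + s * (L * ‖z - y‖^2)) := by
    apply intervalIntegral.integral_mono_on (by norm_num) (hφc.intervalIntegrable 0 1)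
      (by apply Continuous.intervalIntegrable; continuity) hbound
  have hval : ∫ s in (0:ℝ)..1, (⟪f' y, z - y⟫ + s * (L * ‖z - y‖^2))
      = ⟪f' y, z - y⟫ + L/2 * ‖z - y‖^2 := by
    rw [intervalIntegral.integral_add (by apply Continuous.intervalIntegrable; continuity)
      (by apply Continuous.intervalIntegrable; continuity)]
    simp [intervalIntegral.integral_mul_const, integral_id]
    ring
  linarith [key, hI, hval.le, hI.trans hval.le]

lemma integrable_inner_of_sq {α : Type*} [MeasurableSpace α] {μ : Measure α}
    {E : Type*} [NormedAddCommGroup E] [InnerProductSpace ℝ E]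
    {u v : α → E} (hu : AEStronglyMeasurable u μ) (hv : AEStronglyMeasurable v μ)
    (hu2 : Integrable (fun a => ‖u a‖^2) μ) (hv2 : Integrable (fun a => ‖v a‖^2) μ) :
    Integrable (fun a => ⟪u a, v a⟫) μ := by
  refine Integrable.mono' ((hu2.add hv2).const_mul (1/2)) (hu.inner hv) ?_
  filter_upwards with a
  have h1 := abs_real_inner_le_norm (u a) (v a)
  have h2 : ‖u a‖ * ‖v a‖ ≤ 1/2 * (‖u a‖^2 + ‖v a‖^2) := by nlinarith [sq_nonneg (‖u a‖ - ‖v a‖)]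
  calc ‖⟪u a, v a⟫‖ = |⟪u a, v a⟫| := rfl
    _ ≤ ‖u a‖ * ‖v a‖ := h1
    _ ≤ 1/2 * (‖u a‖^2 + ‖v a‖^2) := h2

lemma condexp_comp_clm {α : Type*} {m m0 : MeasurableSpace α} {μ : Measure α}
    [IsFiniteMeasure μ]
    {E F : Type*} [NormedAddCommGroup E] [NormedSpace ℝ E] [CompleteSpace E]
    [NormedAddCommGroup F] [NormedSpace ℝ F] [CompleteSpace F]
    (hm : m ≤ m0) (T : E →L[ℝ] F) {g : α → E} (hg : Integrable g μ) :
    (μ[fun a => T (g a)|m]) =ᵐ[μ] fun a => T ((μ[g|m]) a) := by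
  haveI : SigmaFinite (μ.trim hm) := inferInstance
  refine (ae_eq_condExp_of_forall_setIntegral_eq hm (T.integrable_comp hg)
    (fun s _ _ => (T.integrable_comp integrable_condExp).integrableOn)
    (fun s hs hμs => ?_) ?_).symm
  · rw [T.integral_comp_comm integrable_condExp.integrableOn,
      T.integral_comp_comm hg.integrableOn, setIntegral_condExp hm hg hs]
  · exact T.continuous.comp_aestronglyMeasurable stronglyMeasurable_condExp.aestronglyMeasurable

lemma eucl_inner_sum {n : ℕ} (u v : EuclideanSpace ℝ (Fin n)) :
    ⟪u, v⟫ = ∑ i, u i * v i := by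
  simp [PiLp.inner_apply, RCLike.inner_apply, conj_trivial]
  exact Finset.sum_congr rfl fun i _ => mul_comm _ _

lemma eucl_coord_le {n : ℕ} (u : EuclideanSpace ℝ (Fin n)) (i : Fin n) : |u i| ≤ ‖u‖ := by
  have h : u i = ⟪EuclideanSpace.single i (1:ℝ), u⟫ := by
    simp [EuclideanSpace.inner_single_left]
  rw [h]
  calc |⟪EuclideanSpace.single i (1:ℝ), u⟫| ≤ ‖EuclideanSpace.single i (1:ℝ)‖ * ‖u‖ :=
        abs_real_inner_le_norm _ _
    _ = ‖u‖ := by simp [EuclideanSpace.norm_single]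

lemma integral_inner_eq_of_condexp {α : Type*} {m m0 : MeasurableSpace α} {μ : Measure α}
    [IsProbabilityMeasure μ] (hm : m ≤ m0) {n : ℕ}
    {h g G0 : α → EuclideanSpace ℝ (Fin n)}
    (hh : StronglyMeasurable[m] h) (hh2 : Integrable (fun a => ‖h a‖^2) μ)
    (hg : Integrable g μ) (hg2 : Integrable (fun a => ‖g a‖^2) μ)
    (hG0m : AEStronglyMeasurable G0 μ) (hG02 : Integrable (fun a => ‖G0 a‖^2) μ)
    (hcond : μ[g|m] =ᵐ[μ] G0) :
    ∫ a, ⟪h a, g a⟫ ∂μ = ∫ a, ⟪h a, G0 a⟫ ∂μ := by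
  haveI : SigmaFinite (μ.trim hm) := inferInstance
  have key : ∀ i : Fin n, ∫ a, h a i * g a i ∂μ = ∫ a, h a i * G0 a i ∂μ := by
    intro i
    have hhim : StronglyMeasurable[m] (fun a => h a i) :=
      (EuclideanSpace.proj (𝕜 := ℝ) i).continuous.comp_stronglyMeasurable hh
    have hprod : ∀ {v : α → EuclideanSpace ℝ (Fin n)}, AEStronglyMeasurable v μ →
        Integrable (fun a => ‖v a‖^2) μ → Integrable (fun a => h a i * v a i) μ := by
      intro v hvm hv2
      refine Integrable.mono' ((hh2.add hv2).const_mul (1/2))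
        ((hhim.mono hm).aestronglyMeasurable.mul
          (((EuclideanSpace.proj (𝕜 := ℝ) i).continuous.comp_aestronglyMeasurable hvm))) ?_
      filter_upwards with a
      have h1 := eucl_coord_le (h a) i
      have h2 := eucl_coord_le (v a) i
      have : ‖h a i * v a i‖ = |h a i| * |v a i| := by rw [norm_mul]; rfl
      rw [this]
      simp only [Pi.add_apply]
      nlinarith [abs_nonneg (h a i), abs_nonneg (v a i), sq_nonneg (|h a i| - |v a i|),
        sq_abs (h a i), sq_abs (v a i), norm_nonneg (h a), norm_nonneg (v a),
        eucl_coord_le (h a) i, eucl_coord_le (v a) i,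
        mul_le_mul h1 h2 (abs_nonneg _) (norm_nonneg _)]
    have hgi : Integrable (fun a => g a i) μ :=
      (EuclideanSpace.proj (𝕜 := ℝ) i).integrable_comp hg
    have hcoord : μ[fun a => g a i|m] =ᵐ[μ] fun a => G0 a i := by
      refine (condexp_comp_clm hm (EuclideanSpace.proj (𝕜 := ℝ) i) hg).trans ?_
      filter_upwards [hcond] with a ha
      simp [ha]
    have pull := condExp_mul_of_stronglyMeasurable_left (μ := μ) (m := m) hhim
      (by exact hprod hg.aestronglyMeasurable hg2) hgi
    calc ∫ a, h a i * g a i ∂μ = ∫ a, (μ[(fun a => h a i) * (fun a => g a i)|m]) a ∂μ := by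
          rw [integral_condExp hm]; rfl
      _ = ∫ a, h a i * (μ[fun a => g a i|m]) a ∂μ := by
          refine integral_congr_ae ?_
          filter_upwards [pull] with a ha
          simpa using ha
      _ = ∫ a, h a i * G0 a i ∂μ := by
          refine integral_congr_ae ?_
          filter_upwards [hcoord] with a ha
          rw [ha]
  have expand : ∀ (v : α → EuclideanSpace ℝ (Fin n)), AEStronglyMeasurable v μ →
      Integrable (fun a => ‖v a‖^2) μ →
      ∫ a, ⟪h a, v a⟫ ∂μ = ∑ i, ∫ a, h a i * v a i ∂μ := by
    intro v hvm hv2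
    rw [← integral_finset_sum]
    · refine integral_congr_ae ?_
      filter_upwards with a
      rw [eucl_inner_sum]
    · intro i _
      refine Integrable.mono' ((hh2.add hv2).const_mul (1/2))
        (((((EuclideanSpace.proj (𝕜 := ℝ) i).continuous.comp_stronglyMeasurable hh).mono
          hm).aestronglyMeasurable).mul
          ((EuclideanSpace.proj (𝕜 := ℝ) i).continuous.comp_aestronglyMeasurable hvm)) ?_
      filter_upwards with a
      have h1 := eucl_coord_le (h a) i
      have h2 := eucl_coord_le (v a) i
      have : ‖h a i * v a i‖ = |h a i| * |v a i| := by rw [norm_mul]; rfl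
      rw [this]
      simp only [Pi.add_apply]
      nlinarith [abs_nonneg (h a i), abs_nonneg (v a i), sq_nonneg (|h a i| - |v a i|),
        sq_abs (h a i), sq_abs (v a i), norm_nonneg (h a), norm_nonneg (v a),
        eucl_coord_le (h a) i, eucl_coord_le (v a) i,
        mul_le_mul h1 h2 (abs_nonneg _) (norm_nonneg _)]
  rw [expand g hg.aestronglyMeasurable hg2, expand G0 hG0m hG02]
  exact Finset.sum_congr rfl fun i _ => key i

lemma sgd_arith (γ α L D D' G S I δ δ' s2 : ℝ)
    (hγ0 : 0 < γ) (hγ1 : γ ≤ 1) (hα0 : 0 < α) (hL : 0 < L) (hαL : α*L ≤ 1/2)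
    (hG : 0 ≤ G) (hs2 : 0 ≤ s2)
    (hF1 : D' ≤ D - α*G + L*α^2/2*S)
    (hF2 : δ' = δ - 2*α*I + α^2*S)
    (hF3 : γ*D ≤ I)
    (hF4 : S ≤ G + s2) :
    (2/γ-1)*D' - (2/γ-2)*D ≤ 1/(2*γ*α)*(δ-δ') + s2*α/(2*γ*(1-α*L*γ)) + (1/γ-1)*L*α^2*s2 := by
  obtain ⟨a, haa⟩ : ∃ a : ℝ, a = 1/γ := ⟨_, rfl⟩
  obtain ⟨u, hu⟩ : ∃ u : ℝ, u = 1 - α*L*γ := ⟨_, rfl⟩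
  rw [← hu]
  have ha : γ * a = 1 := by rw [haa]; field_simp
  have ha1 : 1 ≤ a := by rw [haa, le_div_iff₀ hγ0]; linarith
  have h2a : (0:ℝ) ≤ 2*a - 1 := by linarith
  have hu0 : (0:ℝ) < u := by rw [hu]; nlinarith
  have hv : 1 + α*L*γ ≤ 1/u := by
    rw [le_div_iff₀ hu0, hu]; nlinarith [sq_nonneg (α*L*γ)]
  have h2γ : 2/γ = 2*a := by rw [haa]; ring
  have hδ : 1/(2*γ*α)*(δ-δ') = a*I - a*α*S/2 := by
    rw [hF2, haa]
    field_simp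
    ring
  have hI : D ≤ a*I := by
    calc D = (γ*a)*D := by rw [ha, one_mul]
      _ = a*(γ*D) := by ring
      _ ≤ a*I := mul_le_mul_of_nonneg_left hF3 (by linarith)
  have hterm : s2*α*a/2 * (1 + α*L*γ) ≤ s2*α/(2*γ*u) := by
    have he : s2*α/(2*γ*u) = s2*α*a/2 * (1/u) := by
      field_simp [haa, hγ0.ne', hu0.ne']
      ring_nf
      try exact Or.inl trivial
      linear_combination (-s2) * ha
    rw [he]
    exact mul_le_mul_of_nonneg_left hv (by positivity)
  have hA : L*α^2 ≤ α/2 := by nlinarith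
  have t1 : (2*a-1)*(D'-D) ≤ (2*a-1)*(-α*G + L*α^2/2*S) :=
    mul_le_mul_of_nonneg_left (by linarith) h2a
  have hc : 0 ≤ (2*a-1)*L*α^2/2 + α*a/2 := by
    have h1 : 0 ≤ (2*a-1)*L*α^2 := mul_nonneg (mul_nonneg h2a hL.le) (sq_nonneg α)
    have h2 : 0 ≤ α*a := mul_nonneg hα0.le (by linarith)
    linarith
  have t2 : ((2*a-1)*L*α^2/2 + α*a/2)*S ≤ ((2*a-1)*L*α^2/2 + α*a/2)*(G+s2) :=
    mul_le_mul_of_nonneg_left hF4 hc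
  have t3 : (2*a-1)*(L*α^2) ≤ (2*a-1)*(α/2) := mul_le_mul_of_nonneg_left hA h2a
  have t4 : G*((2*a-1)*(L*α^2)) ≤ G*((2*a-1)*(α/2)) := mul_le_mul_of_nonneg_left t3 hG
  have t6 : 0 ≤ G*α*(a-3/4) := mul_nonneg (mul_nonneg hG hα0.le) (by linarith)
  have hx : s2*α*a/2*(1+α*L*γ) = s2*α*a/2 + s2*α^2*L/2 := by
    linear_combination (s2*α^2*L/2) * ha
  have main : (2*a-1)*(-α*G + L*α^2/2*S) + α*a*S/2 ≤ s2*α*a/2*(1+α*L*γ) + (a-1)*L*α^2*s2 := by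
    rw [hx]
    linarith [t2, t4, t6]
  calc (2/γ-1)*D' - (2/γ-2)*D = (2*a-1)*(D'-D) + D := by rw [h2γ]; ring
    _ ≤ (2*a-1)*(-α*G + L*α^2/2*S) + a*I := by linarith
    _ = (a*I - a*α*S/2) + ((2*a-1)*(-α*G + L*α^2/2*S) + α*a*S/2) := by ring
    _ ≤ (a*I - a*α*S/2) + (s2*α*a/2*(1+α*L*γ) + (a-1)*L*α^2*s2) := by linarith
    _ ≤ 1/(2*γ*α)*(δ-δ') + s2*α/(2*γ*u) + (1/γ-1)*L*α^2*s2 := by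
        rw [hδ]
        have h1γ : (1/γ-1) = a - 1 := by rw [haa]
        rw [h1γ]
        linarith

set_option maxHeartbeats 1000000 in
theorem sgd_quasar_one_step
    {Ω : Type*} [MeasurableSpace Ω] (P : Measure Ω) [IsProbabilityMeasure P]
    {n : ℕ} (f : EuclideanSpace ℝ (Fin n) → ℝ)
    (f' : EuclideanSpace ℝ (Fin n) → EuclideanSpace ℝ (Fin n))
    (xstar x₀ : EuclideanSpace ℝ (Fin n))
    (L γ σ R α : ℝ)
    (x g : ℕ → Ω → EuclideanSpace ℝ (Fin n))
    (hgrad : ∀ y, HasGradientAt f (f' y) y)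
    (hmin : ∀ y, f xstar ≤ f y)
    (hγ0 : 0 < γ) (hγ1 : γ ≤ 1)
    (hqc : ∀ y, f xstar ≥ f y + (1/γ) * ⟪f' y, xstar - y⟫)
    (hsmooth : ∀ y z, ‖f' y - f' z‖ ≤ L * ‖y - z‖)
    (hR : ‖x₀ - xstar‖ ≤ R)
    (hα0 : 0 < α) (hα : α ≤ 1/(2*L))
    (hx0 : x 0 = fun _ => x₀)
    (hstep : ∀ t, x (t+1) = fun ω => x t ω - α • g t ω)
    (hgmeas : ∀ t, Measurable (g t))
    (hgint : ∀ t, Integrable (g t) P)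
    (hgsqint : ∀ t, Integrable (fun ω => ‖g t ω‖^2) P)
    (hunbiased : ∀ t,
      MeasureTheory.condExp
          (⨆ i ∈ Finset.range t, MeasurableSpace.comap (g i) inferInstance) P (g t)
        =ᵐ[P] fun ω => f' (x t ω))
    (hvar : ∀ t, ∀ᵐ ω ∂P,
      MeasureTheory.condExp
          (⨆ i ∈ Finset.range t, MeasurableSpace.comap (g i) inferInstance) P
          (fun ω' => ‖g t ω' - f' (x t ω')‖^2) ω ≤ σ^2)
    (hfint : ∀ t, Integrable (fun ω => f (x t ω)) P)
    (hsqint : ∀ t, Integrable (fun ω => ‖x t ω - xstar‖^2) P)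
:    ∀ t : ℕ,
      (2/γ - 1) * (∫ ω, f (x (t+1) ω) ∂P - f xstar)
        - (2/γ - 2) * (∫ ω, f (x t ω) ∂P - f xstar)
      ≤ (1/(2*γ*α)) * (∫ ω, ‖x t ω - xstar‖^2 ∂P - ∫ ω, ‖x (t+1) ω - xstar‖^2 ∂P)
        + σ^2*α/(2*γ*(1-α*L*γ)) + (1/γ - 1)*L*α^2*σ^2 := by
  -- L is positive
  have hL : 0 < L := by
    by_contra hc
    push_neg at hc
    have h2L : 2*L ≤ 0 := by linarith
    have : 1/(2*L) ≤ 0 := one_div_nonpos.mpr h2L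
    linarith
  have hαL : α*L ≤ 1/2 := by
    rw [le_div_iff₀ (by positivity : (0:ℝ) < 2*L)] at hα
    nlinarith
  -- continuity of f'
  have hcf' : Continuous f' := by
    rw [Metric.continuous_iff]
    intro b ε hε
    refine ⟨ε / L, by positivity, fun a ha => ?_⟩
    rw [dist_eq_norm]
    calc ‖f' a - f' b‖ ≤ L * ‖a - b‖ := hsmooth a b
      _ < L * (ε / L) := by
          apply mul_lt_mul_of_pos_left _ hL
          rwa [dist_eq_norm] at ha
      _ = ε := by field_simp
  -- gradient at the minimizer is zero
  have hf'star : f' xstar = 0 := by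
    have hloc : IsLocalMin f xstar := Filter.Eventually.of_forall fun y => hmin y
    have hfd : HasFDerivAt f ((InnerProductSpace.toDual ℝ _) (f' xstar)) xstar :=
      hasGradientAt_iff_hasFDerivAt.mp (hgrad xstar)
    have h0 := hloc.hasFDerivAt_eq_zero hfd
    have := (InnerProductSpace.toDual ℝ (EuclideanSpace ℝ (Fin n))).injective
      (h0.trans (map_zero _).symm)
    exact this
  -- measurability of the iterates
  have hxmeas : ∀ t, Measurable (x t) := by
    intro t
    induction t with
    | zero => rw [hx0]; exact measurable_const
    | succ t ih => rw [hstep]; exact ih.sub ((hgmeas t).const_smul α)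
  -- the filtration
  set m : ℕ → MeasurableSpace Ω :=
    fun t => ⨆ i ∈ Finset.range t, MeasurableSpace.comap (g i) inferInstance with hmdef
  have hm : ∀ t, m t ≤ ‹MeasurableSpace Ω› := fun t =>
    iSup₂_le fun i _ => (hgmeas i).comap_le
  have hmono : ∀ t, m t ≤ m (t+1) := fun t =>
    biSup_mono fun i hi => Finset.mem_range.mpr (Nat.lt_succ_of_lt (Finset.mem_range.mp hi))
  have hgSM : ∀ t, StronglyMeasurable[m (t+1)] (g t) := by
    intro t
    have h1 : Measurable[MeasurableSpace.comap (g t) inferInstance] (g t) :=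
      measurable_iff_comap_le.mpr le_rfl
    have h2 : MeasurableSpace.comap (g t) inferInstance ≤ m (t+1) := by
      rw [hmdef]
      exact le_iSup₂ (f := fun i (_ : i ∈ Finset.range (t+1)) =>
        MeasurableSpace.comap (g i) inferInstance) t (Finset.self_mem_range_succ t)
    exact (h1.mono h2 le_rfl).stronglyMeasurable
  have hxm : ∀ t, StronglyMeasurable[m t] (x t) := by
    intro t
    induction t with
    | zero => rw [hx0]; exact stronglyMeasurable_const
    | succ t ih =>
        rw [hstep]
        exact (ih.mono (hmono t)).sub ((hgSM t).const_smul α)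
  intro t
  -- notation
  obtain ⟨a, hadef⟩ : ∃ a : Ω → EuclideanSpace ℝ (Fin n), a = fun ω => x t ω - xstar :=
    ⟨_, rfl⟩
  have ham : AEStronglyMeasurable a P := by
    rw [hadef]; exact ((hxmeas t).sub measurable_const).aestronglyMeasurable
  have haSM : StronglyMeasurable[m t] a := by
    rw [hadef]; exact (hxm t).sub stronglyMeasurable_const
  have ha2 : Integrable (fun ω => ‖a ω‖^2) P := by
    simp only [hadef]; exact hsqint t
  have hf'meas : Measurable (fun ω => f' (x t ω)) := hcf'.measurable.comp (hxmeas t)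
  have hf'SM : StronglyMeasurable[m t] (fun ω => f' (x t ω)) :=
    hcf'.comp_stronglyMeasurable (hxm t)
  have hf'bound : ∀ ω, ‖f' (x t ω)‖ ≤ L * ‖a ω‖ := by
    intro ω
    rw [hadef]
    have h := hsmooth (x t ω) xstar
    rwa [hf'star, sub_zero] at h
  have hf'2 : Integrable (fun ω => ‖f' (x t ω)‖^2) P := by
    refine (ha2.const_mul (L^2)).mono' (hf'meas.norm.pow_const 2).aestronglyMeasurable ?_
    filter_upwards with ω
    have h := hf'bound ω
    have h2 : ‖(‖f' (x t ω)‖^2 : ℝ)‖ = ‖f' (x t ω)‖^2 := by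
      rw [Real.norm_eq_abs, abs_of_nonneg (sq_nonneg _)]
    rw [h2]
    nlinarith [norm_nonneg (f' (x t ω)), norm_nonneg (a ω)]
  have hf'int : Integrable (fun ω => f' (x t ω)) P := by
    refine Integrable.mono' ((hsqint t).const_mul L |>.add (integrable_const L))
      hf'meas.aestronglyMeasurable ?_
    filter_upwards with ω
    have h := hf'bound ω
    have hna : L * ‖a ω‖ ≤ L * ‖a ω‖^2 + L := by
      nlinarith [norm_nonneg (a ω), hL.le, mul_nonneg hL.le (sq_nonneg (‖a ω‖ - 1))]
    simp only [Pi.add_apply]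
    calc ‖f' (x t ω)‖ ≤ L * ‖a ω‖ := h
      _ ≤ L * ‖a ω‖^2 + L := hna
      _ = L * ‖x t ω - xstar‖^2 + L := by rw [hadef]
  have hgm : AEStronglyMeasurable (g t) P := (hgmeas t).aestronglyMeasurable
  have hg2 := hgsqint t
  -- key conditional expectation identities
  have hinner2 : ∫ ω, ⟪f' (x t ω), g t ω⟫ ∂P = ∫ ω, ‖f' (x t ω)‖^2 ∂P := by
    rw [integral_inner_eq_of_condexp (hm t) hf'SM hf'2 (hgint t) hg2
      hf'meas.aestronglyMeasurable hf'2 (hunbiased t)]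
    congr 1
    funext ω
    exact real_inner_self_eq_norm_sq _
  have hinner1 : ∫ ω, ⟪a ω, g t ω⟫ ∂P = ∫ ω, ⟪a ω, f' (x t ω)⟫ ∂P :=
    integral_inner_eq_of_condexp (hm t) haSM ha2 (hgint t) hg2
      hf'meas.aestronglyMeasurable hf'2 (hunbiased t)
  -- variance bound
  have hd2 : Integrable (fun ω => ‖g t ω - f' (x t ω)‖^2) P := by
    refine ((hg2.add hf'2).const_mul 2).mono'
      ((((hgmeas t).sub hf'meas).norm.pow_const 2).aestronglyMeasurable) ?_
    filter_upwards with ω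
    have h2 : ‖(‖g t ω - f' (x t ω)‖^2 : ℝ)‖ = ‖g t ω - f' (x t ω)‖^2 := by
      rw [Real.norm_eq_abs, abs_of_nonneg (sq_nonneg _)]
    rw [h2]
    have h3 := norm_sub_le (g t ω) (f' (x t ω))
    simp only [Pi.add_apply]
    nlinarith [norm_nonneg (g t ω), norm_nonneg (f' (x t ω)),
      sq_nonneg (‖g t ω‖ - ‖f' (x t ω)‖),
      mul_self_le_mul_self (norm_nonneg (g t ω - f' (x t ω))) h3]
  have hvarint : ∫ ω, ‖g t ω - f' (x t ω)‖^2 ∂P ≤ σ^2 := by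
    haveI : SigmaFinite (P.trim (hm t)) := inferInstance
    have h1 : ∫ ω, (P[fun ω' => ‖g t ω' - f' (x t ω')‖^2|m t]) ω ∂P
        = ∫ ω, ‖g t ω - f' (x t ω)‖^2 ∂P := integral_condExp (hm t)
    have h2 : ∫ ω, (P[fun ω' => ‖g t ω' - f' (x t ω')‖^2|m t]) ω ∂P
        ≤ ∫ _ω, σ^2 ∂P := by
      refine integral_mono_ae integrable_condExp (integrable_const _) ?_
      exact hvar t
    rw [h1] at h2
    simpa using h2
  -- integrable inner products
  have hiag : Integrable (fun ω => ⟪a ω, g t ω⟫) P :=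
    integrable_inner_of_sq ham hgm ha2 hg2
  have hiaf : Integrable (fun ω => ⟪a ω, f' (x t ω)⟫) P :=
    integrable_inner_of_sq ham hf'meas.aestronglyMeasurable ha2 hf'2
  have hifg : Integrable (fun ω => ⟪f' (x t ω), g t ω⟫) P :=
    integrable_inner_of_sq hf'meas.aestronglyMeasurable hgm hf'2 hg2
  have hiff : Integrable (fun ω => ⟪f' (x t ω), f' (x t ω)⟫) P :=
    integrable_inner_of_sq hf'meas.aestronglyMeasurable hf'meas.aestronglyMeasurable hf'2 hf'2
  -- second moment bound : S ≤ G + σ²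
  have hS : ∫ ω, ‖g t ω‖^2 ∂P ≤ ∫ ω, ‖f' (x t ω)‖^2 ∂P + σ^2 := by
    have hpt : ∀ ω, ‖g t ω‖^2 = ‖f' (x t ω)‖^2
        + 2*(⟪f' (x t ω), g t ω⟫ - ⟪f' (x t ω), f' (x t ω)⟫)
        + ‖g t ω - f' (x t ω)‖^2 := by
      intro ω
      have h := norm_add_sq_real (f' (x t ω)) (g t ω - f' (x t ω))
      have h2 : f' (x t ω) + (g t ω - f' (x t ω)) = g t ω := by abel
      rw [h2] at h
      rw [h, inner_sub_right]
      try ring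
    have hint : Integrable (fun ω => ⟪f' (x t ω), g t ω⟫ - ⟪f' (x t ω), f' (x t ω)⟫) P :=
      hifg.sub hiff
    calc ∫ ω, ‖g t ω‖^2 ∂P
        = ∫ ω, (‖f' (x t ω)‖^2
            + 2*(⟪f' (x t ω), g t ω⟫ - ⟪f' (x t ω), f' (x t ω)⟫)
            + ‖g t ω - f' (x t ω)‖^2) ∂P := by
          exact integral_congr_ae (Filter.Eventually.of_forall fun ω => hpt ω)
      _ = ∫ ω, ‖f' (x t ω)‖^2 ∂P
            + 2*(∫ ω, ⟪f' (x t ω), g t ω⟫ ∂P - ∫ ω, ⟪f' (x t ω), f' (x t ω)⟫ ∂P)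
            + ∫ ω, ‖g t ω - f' (x t ω)‖^2 ∂P := by
          have i2 : Integrable (fun ω => ‖f' (x t ω)‖^2
              + 2*(⟪f' (x t ω), g t ω⟫ - ⟪f' (x t ω), f' (x t ω)⟫)) P :=
            hf'2.add (hint.const_mul 2)
          rw [integral_add i2 hd2, integral_add hf'2 (hint.const_mul 2), integral_const_mul,
            integral_sub hifg hiff]
      _ ≤ ∫ ω, ‖f' (x t ω)‖^2 ∂P + σ^2 := by
          have hz : ∫ ω, ⟪f' (x t ω), g t ω⟫ ∂P - ∫ ω, ⟪f' (x t ω), f' (x t ω)⟫ ∂P = 0 := by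
            rw [hinner2]
            have : ∫ ω, ⟪f' (x t ω), f' (x t ω)⟫ ∂P = ∫ ω, ‖f' (x t ω)‖^2 ∂P := by
              congr 1; funext ω; exact real_inner_self_eq_norm_sq _
            rw [this]; ring
          rw [hz]
          linarith [hvarint]
  -- distance recursion
  have hF2 : ∫ ω, ‖x (t+1) ω - xstar‖^2 ∂P
      = ∫ ω, ‖a ω‖^2 ∂P - 2*α*(∫ ω, ⟪a ω, f' (x t ω)⟫ ∂P) + α^2*(∫ ω, ‖g t ω‖^2 ∂P) := by
    have hpt : ∀ ω, ‖x (t+1) ω - xstar‖^2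
        = ‖a ω‖^2 - 2*α*⟪a ω, g t ω⟫ + α^2*‖g t ω‖^2 := by
      intro ω
      have hx1 : x (t+1) ω - xstar = a ω - α • g t ω := by
        rw [hstep t, hadef]
        simp only
        abel
      rw [hx1, norm_sub_sq_real, real_inner_smul_right, norm_smul]
      simp only [Real.norm_eq_abs]
      rw [mul_pow, sq_abs]
      ring
    calc ∫ ω, ‖x (t+1) ω - xstar‖^2 ∂P
        = ∫ ω, (‖a ω‖^2 - 2*α*⟪a ω, g t ω⟫ + α^2*‖g t ω‖^2) ∂P :=
          integral_congr_ae (Filter.Eventually.of_forall fun ω => hpt ω)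
      _ = ∫ ω, ‖a ω‖^2 ∂P - 2*α*(∫ ω, ⟪a ω, g t ω⟫ ∂P) + α^2*(∫ ω, ‖g t ω‖^2 ∂P) := by
          have i3 : Integrable (fun ω => ‖a ω‖^2 - 2*α*⟪a ω, g t ω⟫) P :=
            ha2.sub (hiag.const_mul (2*α))
          rw [integral_add i3 (hg2.const_mul (α^2)),
            integral_sub ha2 (hiag.const_mul (2*α)), integral_const_mul, integral_const_mul]
      _ = _ := by rw [hinner1]
  -- descent in expectation
  have hF1 : ∫ ω, f (x (t+1) ω) ∂P
      ≤ ∫ ω, f (x t ω) ∂P - α*(∫ ω, ‖f' (x t ω)‖^2 ∂P) + L*α^2/2*(∫ ω, ‖g t ω‖^2 ∂P) := by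
    have hpt : ∀ ω, f (x (t+1) ω)
        ≤ f (x t ω) - α*⟪f' (x t ω), g t ω⟫ + L*α^2/2*‖g t ω‖^2 := by
      intro ω
      have h := descent_lemma f f' L hL.le hgrad hsmooth (x t ω) (x (t+1) ω)
      have hz : x (t+1) ω - x t ω = -(α • g t ω) := by
        rw [hstep t]; simp only; abel
      rw [hz] at h
      rw [inner_neg_right, real_inner_smul_right, norm_neg, norm_smul] at h
      simp only [Real.norm_eq_abs] at h
      calc f (x (t+1) ω) ≤ f (x t ω) + -(α * ⟪f' (x t ω), g t ω⟫)
            + L/2 * (|α| * ‖g t ω‖)^2 := h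
        _ = f (x t ω) - α*⟪f' (x t ω), g t ω⟫ + L*α^2/2*‖g t ω‖^2 := by
            rw [mul_pow, sq_abs]; ring
    have hrhs : Integrable (fun ω => f (x t ω) - α*⟪f' (x t ω), g t ω⟫
        + L*α^2/2*‖g t ω‖^2) P :=
      ((hfint t).sub (hifg.const_mul α)).add (hg2.const_mul (L*α^2/2))
    calc ∫ ω, f (x (t+1) ω) ∂P
        ≤ ∫ ω, (f (x t ω) - α*⟪f' (x t ω), g t ω⟫ + L*α^2/2*‖g t ω‖^2) ∂P :=
          integral_mono (hfint (t+1)) hrhs hpt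
      _ = ∫ ω, f (x t ω) ∂P - α*(∫ ω, ⟪f' (x t ω), g t ω⟫ ∂P)
            + L*α^2/2*(∫ ω, ‖g t ω‖^2 ∂P) := by
          have i4 : Integrable (fun ω => f (x t ω) - α*⟪f' (x t ω), g t ω⟫) P :=
            (hfint t).sub (hifg.const_mul α)
          rw [integral_add i4 (hg2.const_mul (L*α^2/2)),
            integral_sub (hfint t) (hifg.const_mul α), integral_const_mul, integral_const_mul]
      _ = _ := by rw [hinner2]
  -- quasar convexity in expectation
  have hF3 : γ*(∫ ω, f (x t ω) ∂P - f xstar) ≤ ∫ ω, ⟪a ω, f' (x t ω)⟫ ∂P := by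
    have hpt : ∀ ω, γ*(f (x t ω) - f xstar) ≤ ⟪a ω, f' (x t ω)⟫ := by
      intro ω
      have h := hqc (x t ω)
      simp only [hadef]
      have hin : ⟪f' (x t ω), xstar - x t ω⟫ = -⟪x t ω - xstar, f' (x t ω)⟫ := by
        rw [show xstar - x t ω = -(x t ω - xstar) by abel, inner_neg_right, real_inner_comm]
      rw [hin] at h
      have h2 : f (x t ω) - f xstar ≤ (1/γ) * ⟪x t ω - xstar, f' (x t ω)⟫ := by linarith
      have h3 := mul_le_mul_of_nonneg_left h2 hγ0.le
      calc γ*(f (x t ω) - f xstar) ≤ γ*((1/γ) * ⟪x t ω - xstar, f' (x t ω)⟫) := h3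
        _ = ⟪x t ω - xstar, f' (x t ω)⟫ := by field_simp
    have hlhs : Integrable (fun ω => γ*(f (x t ω) - f xstar)) P :=
      (((hfint t).sub (integrable_const _))).const_mul γ
    have h := integral_mono hlhs hiaf hpt
    rw [integral_const_mul, integral_sub (hfint t) (integrable_const _)] at h
    simpa using h
  have hG : 0 ≤ ∫ ω, ‖f' (x t ω)‖^2 ∂P := integral_nonneg fun ω => sq_nonneg _
  -- conclude by arithmetic
  have := sgd_arith γ α L
    (∫ ω, f (x t ω) ∂P - f xstar) (∫ ω, f (x (t+1) ω) ∂P - f xstar)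
    (∫ ω, ‖f' (x t ω)‖^2 ∂P) (∫ ω, ‖g t ω‖^2 ∂P)
    (∫ ω, ⟪a ω, f' (x t ω)⟫ ∂P)
    (∫ ω, ‖a ω‖^2 ∂P) (∫ ω, ‖x (t+1) ω - xstar‖^2 ∂P) (σ^2)
    hγ0 hγ1 hα0 hL hαL hG (sq_nonneg σ)
    (by linarith [hF1]) hF2 hF3 hS
  simp only [hadef] at this
  exact this
end

section
/- There is a universal constant C > 0 such that the following holds. Let f be L-smooth and (γ, μ)-strongly-quasar-convex with respect to a global minimizer x*, let R ≥ ‖x₀ − x*‖, σ > 0, and suppose T is large enough that the step size α = (1/(μγT)) log(μ²γ²R²T/(2σ²)) satisfies 0 < α ≤ γ/L and γμα ≤ 1 and that μ²γ²R²T ≥ 2eσ². Then SGD run for T iterations with this step size satisfies E[f(x_T) − f(x*)] ≤ C (Lσ²/(μ²γ²T)) (1 + log(μγR√T/σ)). -/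
open MeasureTheory Finset
open scoped RealInnerProductSpace

section Main
theorem my_descent {n : ℕ} {f : EuclideanSpace ℝ (Fin n) → ℝ} {f' : EuclideanSpace ℝ (Fin n) → EuclideanSpace ℝ (Fin n)} {L : ℝ} (hL : 0 ≤ L)
    (hgrad : ∀ y, HasGradientAt f (f' y) y)
    (hsmooth : ∀ y z, ‖f' y - f' z‖ ≤ L * ‖y - z‖) (x y : EuclideanSpace ℝ (Fin n)) :
    f y ≤ f x + ⟪f' x, y - x⟫ + L/2 * ‖y - x‖^2 := by
  set v := y - x with hv
  have hcf' : Continuous f' := by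
    have : LipschitzWith ⟨L, hL⟩ f' := by
      apply LipschitzWith.of_dist_le_mul
      intro a b
      rw [dist_eq_norm, dist_eq_norm]; exact hsmooth a b
    exact this.continuous
  have hφ : ∀ t : ℝ, HasDerivAt (fun t : ℝ => f (x + t • v)) ⟪f' (x + t • v), v⟫ t := by
    intro t
    have hline : HasDerivAt (fun t : ℝ => x + t • v) v t := by
      simpa using ((hasDerivAt_id t).smul_const v).const_add x
    have := (hgrad (x + t • v)).hasFDerivAt.comp_hasDerivAt t hline
    simpa [InnerProductSpace.toDual, real_inner_comm, Function.comp_def] using this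
  have hcont : Continuous fun t : ℝ => ⟪f' (x + t • v), v⟫ :=
    (Continuous.inner (hcf'.comp (by fun_prop)) continuous_const)
  have hftc : f (x + (1:ℝ) • v) - f (x + (0:ℝ) • v) = ∫ t in (0:ℝ)..1, ⟪f' (x + t • v), v⟫ :=
    (intervalIntegral.integral_eq_sub_of_hasDerivAt (fun t _ => hφ t)
      (hcont.intervalIntegrable _ _)).symm
  have hbound : ∫ t in (0:ℝ)..1, ⟪f' (x + t • v), v⟫
      ≤ ∫ t in (0:ℝ)..1, (⟪f' x, v⟫ + L * t * ‖v‖^2) := by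
    have hc2 : Continuous fun t : ℝ => ⟪f' x, v⟫ + L * t * ‖v‖^2 := by fun_prop
    apply intervalIntegral.integral_mono_on (by norm_num)
      (hcont.intervalIntegrable _ _) (hc2.intervalIntegrable _ _)
    intro t ht
    have h1 : ⟪f' (x + t • v) - f' x, v⟫ ≤ L * t * ‖v‖^2 := by
      calc ⟪f' (x + t • v) - f' x, v⟫ ≤ ‖f' (x + t • v) - f' x‖ * ‖v‖ := real_inner_le_norm _ _
        _ ≤ (L * ‖(x + t • v) - x‖) * ‖v‖ := by
            exact mul_le_mul_of_nonneg_right (hsmooth _ _) (norm_nonneg _)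
        _ = L * t * ‖v‖^2 := by
            rw [add_sub_cancel_left, norm_smul, Real.norm_eq_abs, abs_of_nonneg ht.1]
            ring
    have := inner_sub_left (𝕜 := ℝ) (f' (x + t • v)) (f' x) v
    nlinarith [h1]
  have hcalc : ∫ t in (0:ℝ)..1, (⟪f' x, v⟫ + L * t * ‖v‖^2) = ⟪f' x, v⟫ + L/2 * ‖v‖^2 := by
    have hc3 : Continuous fun t : ℝ => L * t * ‖v‖^2 := by fun_prop
    have h2 : (∫ t in (0:ℝ)..1, L * t * ‖v‖^2) = L/2 * ‖v‖^2 := by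
      rw [show (fun t : ℝ => L * t * ‖v‖^2) = fun t : ℝ => (L * ‖v‖^2) * t by ext t; ring]
      rw [intervalIntegral.integral_const_mul, integral_id]
      ring
    rw [intervalIntegral.integral_add (intervalIntegrable_const) (hc3.intervalIntegrable _ _), h2]
    simp
  have : x + (1:ℝ) • v = y := by simp [hv]
  have h0 : x + (0:ℝ) • v = x := by simp
  rw [this, h0] at hftc
  linarith [hbound, hftc, hcalc.le, hcalc.ge]

theorem my_coord_le {n : ℕ} (x : EuclideanSpace ℝ (Fin n)) (i : Fin n) : |x i| ≤ ‖x‖ := by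
  rw [EuclideanSpace.norm_eq, ← Real.sqrt_sq_eq_abs]
  apply Real.sqrt_le_sqrt
  have := Finset.single_le_sum (f := fun j => ‖x j‖^2) (fun j _ => sq_nonneg _) (Finset.mem_univ i)
  simpa [Real.norm_eq_abs, sq_abs] using this

theorem my_condExp_clm {Ω : Type} {m m0 : MeasurableSpace Ω} (hm : m ≤ m0) (P : Measure Ω)
    [IsFiniteMeasure P] {E F : Type*} [NormedAddCommGroup E] [NormedSpace ℝ E] [CompleteSpace E]
    [NormedAddCommGroup F] [NormedSpace ℝ F] [CompleteSpace F]
    (L : E →L[ℝ] F) {g : Ω → E} (hg : Integrable g P) :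
    (MeasureTheory.condExp m P (fun ω => L (g ω))) =ᵐ[P] fun ω => L (MeasureTheory.condExp m P g ω) := by
  haveI : SigmaFinite (P.trim hm) := by
    have : IsFiniteMeasure (P.trim hm) := isFiniteMeasure_trim hm
    infer_instance
  refine (ae_eq_condExp_of_forall_setIntegral_eq hm (L.integrable_comp hg) ?_ ?_ ?_).symm
  · intro s _ _
    exact (L.integrable_comp integrable_condExp).integrableOn
  · intro s hs hμs
    rw [L.integral_comp_comm integrable_condExp.integrableOn,
      L.integral_comp_comm hg.integrableOn, setIntegral_condExp hm hg hs]
  · exact StronglyMeasurable.aestronglyMeasurable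
      (L.continuous.comp_stronglyMeasurable stronglyMeasurable_condExp)

theorem my_pullout {Ω : Type} {m m0 : MeasurableSpace Ω} (hm : m ≤ m0) (P : Measure Ω)
    [IsProbabilityMeasure P] {n : ℕ} {g G h : Ω → EuclideanSpace ℝ (Fin n)}
    (hgint : Integrable g P) (hgsq : Integrable (fun ω => ‖g ω‖^2) P)
    (hhm : StronglyMeasurable[m] h)
    (hhsq : Integrable (fun ω => ‖h ω‖^2) P)
    (hGmeas : AEStronglyMeasurable G P) (hGsq : Integrable (fun ω => ‖G ω‖^2) P)
    (hG : MeasureTheory.condExp m P g =ᵐ[P] G) :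
    ∫ ω, ⟪g ω, h ω⟫ ∂P = ∫ ω, ⟪G ω, h ω⟫ ∂P := by
  haveI : SigmaFinite (P.trim hm) := by
    have : IsFiniteMeasure (P.trim hm) := isFiniteMeasure_trim hm
    infer_instance
  have hhmeas : AEStronglyMeasurable h P := (hhm.mono hm).aestronglyMeasurable
  -- coordinate integrability
  have key : ∀ (u v : Ω → EuclideanSpace ℝ (Fin n)), AEStronglyMeasurable u P →
      AEStronglyMeasurable v P → Integrable (fun ω => ‖u ω‖^2) P →
      Integrable (fun ω => ‖v ω‖^2) P → ∀ i : Fin n,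
      Integrable (fun ω => u ω i * v ω i) P := by
    intro u v hu hv husq hvsq i
    have hmeas : AEStronglyMeasurable (fun ω => u ω i * v ω i) P := by
      have hui : AEStronglyMeasurable (fun ω => u ω i) P :=
        ((EuclideanSpace.proj i).continuous.comp_aestronglyMeasurable hu)
      have hvi : AEStronglyMeasurable (fun ω => v ω i) P :=
        ((EuclideanSpace.proj i).continuous.comp_aestronglyMeasurable hv)
      exact hui.mul hvi
    refine Integrable.mono' ((husq.add hvsq).div_const 2) hmeas ?_
    filter_upwards with ω
    have h1 : |u ω i| ≤ ‖u ω‖ := my_coord_le _ _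
    have h2 : |v ω i| ≤ ‖v ω‖ := my_coord_le _ _
    have := abs_mul (u ω i) (v ω i)
    have hb : |u ω i| * |v ω i| ≤ (‖u ω‖^2 + ‖v ω‖^2)/2 := by
      nlinarith [mul_le_mul h1 h2 (abs_nonneg _) (norm_nonneg _), sq_nonneg (‖u ω‖ - ‖v ω‖)]
    simpa [Real.norm_eq_abs, this] using hb
  have hinner_exp : ∀ (u : Ω → EuclideanSpace ℝ (Fin n)),
      (∀ i, Integrable (fun ω => u ω i * h ω i) P) →
      ∫ ω, ⟪u ω, h ω⟫ ∂P = ∑ i : Fin n, ∫ ω, u ω i * h ω i ∂P := by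
    intro u hui
    rw [← integral_finset_sum _ (fun i _ => hui i)]
    refine integral_congr_ae (Filter.Eventually.of_forall fun ω => ?_)
    simp [PiLp.inner_apply, RCLike.inner_apply, conj_trivial, mul_comm]
  have hgi := key g h hgint.1 hhmeas hgsq hhsq
  have hGi := key G h hGmeas hhmeas hGsq hhsq
  rw [hinner_exp g hgi, hinner_exp G hGi]
  refine Finset.sum_congr rfl fun i _ => ?_
  -- per coordinate
  have hgicoord : Integrable (fun ω => g ω i) P :=
    (((EuclideanSpace.proj i : EuclideanSpace ℝ (Fin n) →L[ℝ] ℝ)).integrable_comp hgint)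
  have hcondi : MeasureTheory.condExp m P (fun ω => g ω i) =ᵐ[P] fun ω => G ω i := by
    have h1 := my_condExp_clm hm P ((EuclideanSpace.proj i : EuclideanSpace ℝ (Fin n) →L[ℝ] ℝ)) hgint
    have h2 : (fun ω => ((EuclideanSpace.proj i : EuclideanSpace ℝ (Fin n) →L[ℝ] ℝ)) (MeasureTheory.condExp m P g ω))
        =ᵐ[P] fun ω => G ω i := by
      filter_upwards [hG] with ω hω
      simp [hω]
    exact (h1.trans h2)
  have hmul : (fun ω => h ω i * g ω i) = fun ω => (fun ω' => h ω' i) ω * (fun ω' => g ω' i) ω := rfl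
  have hhim : StronglyMeasurable[m] (fun ω => h ω i) :=
    ((EuclideanSpace.proj i : EuclideanSpace ℝ (Fin n) →L[ℝ] ℝ)).continuous.comp_stronglyMeasurable hhm
  have hpull := condExp_mul_of_stronglyMeasurable_left (μ := P) (m := m) hhim
      (by simpa [mul_comm, Pi.mul_def] using hgi i) hgicoord
  calc ∫ ω, g ω i * h ω i ∂P = ∫ ω, ((fun ω' => h ω' i) * fun ω' => g ω' i) ω ∂P := by
        congr 1; ext ω; simp [mul_comm]
    _ = ∫ ω, (MeasureTheory.condExp m P ((fun ω' => h ω' i) * fun ω' => g ω' i)) ω ∂P := by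
        rw [integral_condExp hm]
    _ = ∫ ω, h ω i * (MeasureTheory.condExp m P fun ω' => g ω' i) ω ∂P := by
        refine integral_congr_ae ?_
        filter_upwards [hpull] with ω hω
        simpa using hω
    _ = ∫ ω, G ω i * h ω i ∂P := by
        refine integral_congr_ae ?_
        filter_upwards [hcondi] with ω hω
        rw [hω]; ring


set_option maxHeartbeats 2000000 in
theorem sgd_strongly_quasar_last_iterate_value :
    ∃ C : ℝ, 0 < C ∧
      ∀ {Ω : Type} [MeasurableSpace Ω] (P : Measure Ω) [IsProbabilityMeasure P]
    {n : ℕ} (f : EuclideanSpace ℝ (Fin n) → ℝ)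
    (f' : EuclideanSpace ℝ (Fin n) → EuclideanSpace ℝ (Fin n))
    (xstar x₀ : EuclideanSpace ℝ (Fin n))
    (L γ μ σ R α : ℝ) (T : ℕ)
    (x g : ℕ → Ω → EuclideanSpace ℝ (Fin n))
    (hgrad : ∀ y, HasGradientAt f (f' y) y)
    (hmin : ∀ y, f xstar ≤ f y)
    (hγ0 : 0 < γ) (hγ1 : γ ≤ 1) (hμ : 0 < μ)
    (hsqc : ∀ y, f xstar ≥ f y + (1/γ) * ⟪f' y, xstar - y⟫ + (μ/2) * ‖y - xstar‖^2)
    (hsmooth : ∀ y z, ‖f' y - f' z‖ ≤ L * ‖y - z‖)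
    (hR : ‖x₀ - xstar‖ ≤ R)
    (hσ : 0 < σ)
    (hαdef : α = (1/(μ*γ*(T : ℝ))) * Real.log (μ^2*γ^2*R^2*(T : ℝ)/(2*σ^2)))
    (hα0 : 0 < α) (hα1 : α ≤ γ/L) (hα2 : γ*μ*α ≤ 1)
    (hTe : μ^2*γ^2*R^2*(T : ℝ) ≥ 2*Real.exp 1*σ^2)
    (hx0 : x 0 = fun _ => x₀)
    (hstep : ∀ t, x (t+1) = fun ω => x t ω - α • g t ω)
    (hgmeas : ∀ t, Measurable (g t))
    (hgint : ∀ t, Integrable (g t) P)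
    (hgsqint : ∀ t, Integrable (fun ω => ‖g t ω‖^2) P)
    (hunbiased : ∀ t,
      MeasureTheory.condExp
          (⨆ i ∈ Finset.range t, MeasurableSpace.comap (g i) inferInstance) P (g t)
        =ᵐ[P] fun ω => f' (x t ω))
    (hvar : ∀ t, ∀ᵐ ω ∂P,
      MeasureTheory.condExp
          (⨆ i ∈ Finset.range t, MeasurableSpace.comap (g i) inferInstance) P
          (fun ω' => ‖g t ω' - f' (x t ω')‖^2) ω ≤ σ^2)
    (hfint : ∀ t, Integrable (fun ω => f (x t ω)) P)
    (hsqint : ∀ t, Integrable (fun ω => ‖x t ω - xstar‖^2) P)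
,      ∫ ω, f (x T ω) ∂P - f xstar
        ≤ C * (L*σ^2/(μ^2*γ^2*(T : ℝ))) * (1 + Real.log (μ*γ*R*Real.sqrt (T : ℝ)/σ)) := by
  refine ⟨1, one_pos, ?_⟩
  intro Ω mΩ P hP n f f' xstar x₀ L γ μ σ R α T x g hgrad hmin hγ0 hγ1 hμ hsqc hsmooth hR hσ
    hαdef hα0 hα1 hα2 hTe hx0 hstep hgmeas hgint hgsqint hunbiased hvar hfint hsqint
  -- basic positivity facts
  have hL0 : 0 < L := by
    rcases lt_trichotomy L 0 with h | h | h
    · exfalso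
      have : γ / L < 0 := div_neg_of_pos_of_neg hγ0 h
      linarith
    · exfalso
      rw [h, div_zero] at hα1
      linarith
    · exact h
  have hT0 : 0 < (T : ℝ) := by
    rcases Nat.eq_zero_or_pos T with h | h
    · exfalso
      rw [h] at hTe
      push_cast at hTe
      nlinarith [mul_pos (Real.exp_pos 1) (pow_pos hσ 2)]
    · exact_mod_cast h
  have hR0 : 0 < R := by
    rcases le_or_gt R 0 with h | h
    · exfalso
      have hRnn : 0 ≤ R := le_trans (norm_nonneg _) hR
      have : R = 0 := le_antisymm h hRnn
      rw [this] at hTe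
      nlinarith [mul_pos (Real.exp_pos 1) (pow_pos hσ 2)]
    · exact h
  -- gradient at minimizer is zero
  have hfstar : f' xstar = 0 := by
    have hloc : IsLocalMin f xstar := Filter.Eventually.of_forall hmin
    have := hloc.hasFDerivAt_eq_zero (hgrad xstar).hasFDerivAt
    have h2 := congrArg (fun φ => (InnerProductSpace.toDual ℝ (EuclideanSpace ℝ (Fin n))).symm φ) this
    simpa [HasGradientAt, HasGradientAtFilter] using h2
  have hub : ∀ y z, f z ≤ f y + ⟪f' y, z - y⟫ + L/2 * ‖z - y‖^2 :=
    fun y z => my_descent hL0.le hgrad hsmooth y z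
  -- quadratic upper bound around the min
  have hup : ∀ y, f y - f xstar ≤ L/2 * ‖y - xstar‖^2 := by
    intro y
    have := hub xstar y
    rw [hfstar] at this
    simp only [inner_zero_left] at this
    linarith
  -- gradient norm bound
  have hgradsq : ∀ y, ‖f' y‖^2 ≤ 2*L*(f y - f xstar) := by
    intro y
    have h1 := hub y (y - L⁻¹ • f' y)
    have h2 := hmin (y - L⁻¹ • f' y)
    rw [sub_sub_cancel_left] at h1
    rw [inner_neg_right, real_inner_smul_right, real_inner_self_eq_norm_sq,
      norm_neg, norm_smul, Real.norm_eq_abs, abs_of_nonneg (inv_nonneg.mpr hL0.le)] at h1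
    have hL' : L ≠ 0 := hL0.ne'
    have : f xstar ≤ f y - L⁻¹ * ‖f' y‖^2 + L/2 * (L⁻¹*‖f' y‖)^2 := le_trans h2 h1
    have hexp : L/2 * (L⁻¹*‖f' y‖)^2 = L⁻¹/2 * ‖f' y‖^2 := by
      field_simp
    rw [hexp] at this
    have h3 : L⁻¹/2 * ‖f' y‖^2 ≤ f y - f xstar := by linarith
    calc ‖f' y‖^2 = 2*L*(L⁻¹/2 * ‖f' y‖^2) := by field_simp
      _ ≤ 2*L*(f y - f xstar) := by
          apply mul_le_mul_of_nonneg_left h3 (by positivity)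
  -- Lipschitz continuity of f'
  have hf'c : Continuous f' := by
    have : LipschitzWith ⟨L, hL0.le⟩ f' := by
      apply LipschitzWith.of_dist_le_mul
      intro a b
      rw [dist_eq_norm, dist_eq_norm]; exact hsmooth a b
    exact this.continuous
  have hf'bd : ∀ y, ‖f' y‖ ≤ L * ‖y - xstar‖ := by
    intro y
    have := hsmooth y xstar
    rwa [hfstar, sub_zero] at this
  -- filtration
  set F : ℕ → MeasurableSpace Ω :=
    fun t => ⨆ i ∈ Finset.range t, MeasurableSpace.comap (g i) inferInstance with hF
  have hFle : ∀ t, F t ≤ mΩ := by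
    intro t
    apply iSup₂_le
    intro i _
    exact measurable_iff_comap_le.mp (hgmeas i)
  have hFmono : ∀ s t, s ≤ t → F s ≤ F t := by
    intro s t hst
    apply iSup₂_le
    intro i hi
    exact le_iSup₂ (f := fun i (_ : i ∈ Finset.range t) => MeasurableSpace.comap (g i) inferInstance)
      i (Finset.mem_range.mpr (lt_of_lt_of_le (Finset.mem_range.mp hi) hst))
  have hgFm : ∀ t, Measurable[F (t+1)] (g t) := by
    intro t
    apply measurable_iff_comap_le.mpr
    exact le_iSup₂ (f := fun i (_ : i ∈ Finset.range (t+1)) => MeasurableSpace.comap (g i) inferInstance)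
      t (Finset.self_mem_range_succ t)
  have hxm : ∀ t, StronglyMeasurable[F t] (x t) := by
    intro t
    induction t with
    | zero => rw [hx0]; exact stronglyMeasurable_const
    | succ t ih =>
      rw [hstep t]
      exact ((ih.mono (hFmono t (t+1) (Nat.le_succ t))).sub
        (((hgFm t).stronglyMeasurable).const_smul α))
  have hxmeas : ∀ t, AEStronglyMeasurable (x t) P :=
    fun t => ((hxm t).mono (hFle t)).aestronglyMeasurable
  -- integrability of auxiliary functions
  have hf'meas : ∀ t, AEStronglyMeasurable (fun ω => f' (x t ω)) P :=
    fun t => hf'c.comp_aestronglyMeasurable (hxmeas t)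
  have hf'sqint : ∀ t, Integrable (fun ω => ‖f' (x t ω)‖^2) P := by
    intro t
    refine Integrable.mono' ((hsqint t).const_mul (L^2)) ?_ ?_
    · have h1 := (hf'meas t).norm
      simpa [sq, Pi.mul_def] using h1.mul h1
    · filter_upwards with ω
      have h1 := hf'bd (x t ω)
      have h2 : ‖f' (x t ω)‖^2 ≤ (L*‖x t ω - xstar‖)^2 := by
        apply sq_le_sq' _ h1
        nlinarith [norm_nonneg (f' (x t ω))]
      rw [Real.norm_eq_abs, abs_of_nonneg (sq_nonneg _)]
      nlinarith [h2]
  have hdiffsqint : ∀ t, Integrable (fun ω => ‖g t ω - f' (x t ω)‖^2) P := by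
    intro t
    refine Integrable.mono' (((hgsqint t).const_mul 2).add ((hf'sqint t).const_mul 2)) ?_ ?_
    · have h1 := ((hgmeas t).aestronglyMeasurable.sub (hf'meas t)).norm
      simpa [sq, Pi.mul_def] using h1.mul h1
    · filter_upwards with ω
      simp only [Pi.add_apply]
      rw [Real.norm_eq_abs, abs_of_nonneg (sq_nonneg _)]
      have h0 := norm_sub_le (g t ω) (f' (x t ω))
      have h1 := pow_le_pow_left₀ (norm_nonneg (g t ω - f' (x t ω))) h0 2
      nlinarith [sq_nonneg (‖g t ω‖ - ‖f' (x t ω)‖)]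
  have hinner_int : ∀ (u v : Ω → EuclideanSpace ℝ (Fin n)), AEStronglyMeasurable u P →
      AEStronglyMeasurable v P → Integrable (fun ω => ‖u ω‖^2) P →
      Integrable (fun ω => ‖v ω‖^2) P → Integrable (fun ω => ⟪u ω, v ω⟫) P := by
    intro u v hu hv husq hvsq
    refine Integrable.mono' ((husq.add hvsq).div_const 2) (hu.inner hv) ?_
    filter_upwards with ω
    simp only [Pi.add_apply]
    rw [Real.norm_eq_abs]
    have h1 := abs_real_inner_le_norm (u ω) (v ω)
    nlinarith [sq_nonneg (‖u ω‖ - ‖v ω‖), norm_nonneg (u ω), norm_nonneg (v ω)]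
  have hxsubsq : ∀ t, Integrable (fun ω => ‖x t ω - xstar‖^2) P := hsqint
  -- notation
  set a : ℕ → ℝ := fun t => ∫ ω, ‖x t ω - xstar‖^2 ∂P with ha
  set b : ℕ → ℝ := fun t => ∫ ω, (f (x t ω) - f xstar) ∂P with hb
  have hbnonneg : ∀ t, 0 ≤ b t := by
    intro t
    apply integral_nonneg
    intro ω
    exact sub_nonneg.mpr (hmin (x t ω))
  have hbdef : ∀ t, b t = ∫ ω, f (x t ω) ∂P - f xstar := by
    intro t
    simp only [hb]
    rw [integral_sub (hfint t) (integrable_const _)]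
    simp
  -- key expectation identities at step t
  have hinner_pull : ∀ t, ∫ ω, ⟪g t ω, x t ω - xstar⟫ ∂P
      = ∫ ω, ⟪f' (x t ω), x t ω - xstar⟫ ∂P := by
    intro t
    exact my_pullout (hFle t) P (hgint t) (hgsqint t)
      ((hxm t).sub stronglyMeasurable_const) (hsqint t) (hf'meas t) (hf'sqint t) (hunbiased t)
  have hinner_pull2 : ∀ t, ∫ ω, ⟪g t ω, f' (x t ω)⟫ ∂P
      = ∫ ω, ‖f' (x t ω)‖^2 ∂P := by
    intro t
    have h1 : StronglyMeasurable[F t] (fun ω => f' (x t ω)) :=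
      hf'c.comp_stronglyMeasurable (hxm t)
    have := my_pullout (hFle t) P (hgint t) (hgsqint t) h1 (hf'sqint t)
      (hf'meas t) (hf'sqint t) (hunbiased t)
    have h2 : ∫ ω, ⟪f' (x t ω), f' (x t ω)⟫ ∂P = ∫ ω, ‖f' (x t ω)‖^2 ∂P :=
      integral_congr_ae (Filter.Eventually.of_forall fun ω => real_inner_self_eq_norm_sq _)
    exact this.trans h2
  have hvarint : ∀ t, ∫ ω, ‖g t ω - f' (x t ω)‖^2 ∂P ≤ σ^2 := by
    intro t
    haveI : SigmaFinite (P.trim (hFle t)) := by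
      have : IsFiniteMeasure (P.trim (hFle t)) := isFiniteMeasure_trim (hFle t)
      infer_instance
    rw [← integral_condExp (hFle t)]
    calc ∫ ω, (MeasureTheory.condExp (F t) P (fun ω' => ‖g t ω' - f' (x t ω')‖^2)) ω ∂P
        ≤ ∫ _ω, σ^2 ∂P := by
          apply integral_mono_ae integrable_condExp (integrable_const _) (hvar t)
      _ = σ^2 := by simp
  -- second moment bound
  have hsecond : ∀ t, ∫ ω, ‖g t ω‖^2 ∂P ≤ σ^2 + 2*L*(b t) := by
    intro t
    have hptw : ∀ ω, ‖g t ω‖^2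
        = ‖g t ω - f' (x t ω)‖^2 + 2*⟪g t ω, f' (x t ω)⟫ - ‖f' (x t ω)‖^2 := by
      intro ω
      have := norm_sub_sq_real (g t ω) (f' (x t ω))
      linarith
    have hint2 : Integrable (fun ω => ⟪g t ω, f' (x t ω)⟫) P :=
      hinner_int _ _ (hgmeas t).aestronglyMeasurable (hf'meas t) (hgsqint t) (hf'sqint t)
    have hI2' : Integrable (fun ω => 2*⟪g t ω, f' (x t ω)⟫) P := hint2.const_mul 2
    have hI12 : Integrable (fun ω => ‖g t ω - f' (x t ω)‖^2 + 2*⟪g t ω, f' (x t ω)⟫) P :=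
      (hdiffsqint t).add hI2'
    have hsplit : ∫ ω, ‖g t ω‖^2 ∂P
        = (∫ ω, ‖g t ω - f' (x t ω)‖^2 ∂P) + 2*(∫ ω, ⟪g t ω, f' (x t ω)⟫ ∂P)
          - ∫ ω, ‖f' (x t ω)‖^2 ∂P := by
      have e0 : ∫ ω, ‖g t ω‖^2 ∂P = ∫ ω, (‖g t ω - f' (x t ω)‖^2 + 2*⟪g t ω, f' (x t ω)⟫
          - ‖f' (x t ω)‖^2) ∂P :=
        integral_congr_ae (Filter.Eventually.of_forall fun ω => by simpa using hptw ω)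
      rw [e0, integral_sub hI12 (hf'sqint t), integral_add (hdiffsqint t) hI2',
        integral_const_mul 2 (fun ω => ⟪g t ω, f' (x t ω)⟫)]
    rw [hsplit, hinner_pull2 t]
    have hgb : ∫ ω, ‖f' (x t ω)‖^2 ∂P ≤ 2*L*(b t) := by
      simp only [hb]
      have hI : Integrable (fun ω => 2*L*(f (x t ω) - f xstar)) P :=
        ((hfint t).sub (integrable_const _)).const_mul (2*L)
      have h5 : ∫ ω, ‖f' (x t ω)‖^2 ∂P ≤ ∫ ω, 2*L*(f (x t ω) - f xstar) ∂P := by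
        apply integral_mono (hf'sqint t) hI
        intro ω
        exact hgradsq (x t ω)
      rwa [integral_const_mul (2*L) (fun ω => f (x t ω) - f xstar)] at h5
    linarith [hvarint t]
  -- the inner product lower bound from quasar convexity
  have hquasar : ∀ y, ⟪f' y, y - xstar⟫ ≥ γ*(f y - f xstar) + γ*μ/2*‖y - xstar‖^2 := by
    intro y
    have h := hsqc y
    have h2 : ⟪f' y, xstar - y⟫ = -⟪f' y, y - xstar⟫ := by
      rw [← inner_neg_right]
      congr 1
      abel
    rw [h2] at h
    have hγ' : γ ≠ 0 := hγ0.ne'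
    have h3 : (1/γ) * ⟪f' y, y - xstar⟫ ≥ f y - f xstar + μ/2*‖y - xstar‖^2 := by linarith
    have h4 := mul_le_mul_of_nonneg_left h3 hγ0.le
    rw [show γ * ((1/γ) * ⟪f' y, y - xstar⟫) = ⟪f' y, y - xstar⟫ by field_simp] at h4
    nlinarith [h4]
  have hfirst : ∀ t, ∫ ω, ⟪g t ω, x t ω - xstar⟫ ∂P ≥ γ*(b t) + γ*μ/2*(a t) := by
    intro t
    simp only [hb, ha]
    rw [hinner_pull t]
    have hIq1 : Integrable (fun ω => γ*(f (x t ω) - f xstar)) P :=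
      ((hfint t).sub (integrable_const _)).const_mul γ
    have hIq2 : Integrable (fun ω => γ*μ/2*‖x t ω - xstar‖^2) P :=
      (hsqint t).const_mul (γ*μ/2)
    have h5 : ∫ ω, ⟪f' (x t ω), x t ω - xstar⟫ ∂P
        ≥ ∫ ω, (γ*(f (x t ω) - f xstar) + γ*μ/2*‖x t ω - xstar‖^2) ∂P := by
      apply integral_mono _ _ (fun ω => hquasar (x t ω))
      · exact hIq1.add hIq2
      · exact hinner_int _ _ (hf'meas t) ((hxmeas t).sub aestronglyMeasurable_const)
          (hf'sqint t) (hsqint t)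
    rw [integral_add hIq1 hIq2, integral_const_mul γ (fun ω => f (x t ω) - f xstar),
      integral_const_mul (γ*μ/2) (fun ω => ‖x t ω - xstar‖^2)] at h5
    exact h5
  -- one-step recursion
  have hstep_ineq : ∀ t, a (t+1) ≤ (1 - γ*μ*α) * a t + α^2*σ^2 := by
    intro t
    have hptw : ∀ ω, ‖x (t+1) ω - xstar‖^2
        = ‖x t ω - xstar‖^2 - 2*α*⟪g t ω, x t ω - xstar⟫ + α^2*‖g t ω‖^2 := by
      intro ω
      rw [hstep t]
      have harr : (x t ω - α • g t ω) - xstar = (x t ω - xstar) - α • g t ω := by abel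
      simp only
      rw [harr, norm_sub_sq_real, real_inner_smul_right, norm_smul, Real.norm_eq_abs,
        abs_of_nonneg hα0.le, mul_pow, real_inner_comm]
      ring
    have hint1 : Integrable (fun ω => ⟪g t ω, x t ω - xstar⟫) P :=
      hinner_int _ _ (hgmeas t).aestronglyMeasurable ((hxmeas t).sub aestronglyMeasurable_const)
        (hgsqint t) (hsqint t)
    have hI1' : Integrable (fun ω => 2*α*⟪g t ω, x t ω - xstar⟫) P := hint1.const_mul (2*α)
    have hI2' : Integrable (fun ω => ‖x t ω - xstar‖^2 - 2*α*⟪g t ω, x t ω - xstar⟫) P :=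
      (hsqint t).sub hI1'
    have hI3' : Integrable (fun ω => α^2*‖g t ω‖^2) P := (hgsqint t).const_mul (α^2)
    have hsplit : a (t+1) = a t - 2*α*(∫ ω, ⟪g t ω, x t ω - xstar⟫ ∂P)
        + α^2*(∫ ω, ‖g t ω‖^2 ∂P) := by
      simp only [ha]
      have e0 : ∫ ω, ‖x (t+1) ω - xstar‖^2 ∂P
          = ∫ ω, (‖x t ω - xstar‖^2 - 2*α*⟪g t ω, x t ω - xstar⟫ + α^2*‖g t ω‖^2) ∂P :=
        integral_congr_ae (Filter.Eventually.of_forall fun ω => by simpa using hptw ω)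
      rw [e0, integral_add hI2' hI3', integral_sub (hsqint t) hI1',
        integral_const_mul (2*α) (fun ω => ⟪g t ω, x t ω - xstar⟫),
        integral_const_mul (α^2) (fun ω => ‖g t ω‖^2)]
    rw [hsplit]
    have h1 := hfirst t
    have h2 := hsecond t
    have hbL : (2*α^2*L - 2*α*γ) * b t ≤ 0 := by
      apply mul_nonpos_of_nonpos_of_nonneg _ (hbnonneg t)
      have hαL : α * L ≤ γ := (le_div_iff₀ hL0).mp hα1
      nlinarith [hα0.le]
    nlinarith [mul_le_mul_of_nonneg_left h2 (sq_nonneg α),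
      mul_le_mul_of_nonneg_left h1 (by positivity : (0:ℝ) ≤ 2*α)]
  -- iterate the recursion
  have ha0 : a 0 ≤ R^2 := by
    simp only [ha, hx0]
    rw [integral_const]
    simp only [measureReal_def, measure_univ, ENNReal.toReal_one, one_smul, smul_eq_mul, one_mul]
    nlinarith [hR, norm_nonneg (x₀ - xstar)]
  have hc1 : 0 ≤ 1 - γ*μ*α := by linarith
  have hKnn : 0 ≤ α*σ^2/(μ*γ) := by positivity
  have hiter : ∀ t, a t ≤ (1 - γ*μ*α)^t * R^2 + α*σ^2/(μ*γ) := by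
    intro t
    induction t with
    | zero =>
      simpa using le_trans ha0 (by linarith)
    | succ t ih =>
      have h1 := hstep_ineq t
      have h2 : (1 - γ*μ*α) * a t ≤ (1 - γ*μ*α) * ((1 - γ*μ*α)^t * R^2 + α*σ^2/(μ*γ)) :=
        mul_le_mul_of_nonneg_left ih hc1
      have h3 : (1 - γ*μ*α) * ((1 - γ*μ*α)^t * R^2 + α*σ^2/(μ*γ)) + α^2*σ^2
          = (1 - γ*μ*α)^(t+1) * R^2 + α*σ^2/(μ*γ) := by
        have hμγ : μ*γ ≠ 0 := by positivity
        field_simp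
        ring
      calc a (t+1) ≤ (1 - γ*μ*α) * a t + α^2*σ^2 := h1
        _ ≤ (1 - γ*μ*α) * ((1 - γ*μ*α)^t * R^2 + α*σ^2/(μ*γ)) + α^2*σ^2 := by linarith
        _ = (1 - γ*μ*α)^(t+1) * R^2 + α*σ^2/(μ*γ) := h3
  -- final bound on b T
  have hbT : b T ≤ L/2 * ((1 - γ*μ*α)^T * R^2 + α*σ^2/(μ*γ)) := by
    have h1 : b T ≤ L/2 * a T := by
      simp only [hb, ha]
      have hI : Integrable (fun ω => L/2 * ‖x T ω - xstar‖^2) P := (hsqint T).const_mul (L/2)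
      have h5 : ∫ ω, (f (x T ω) - f xstar) ∂P ≤ ∫ ω, L/2 * ‖x T ω - xstar‖^2 ∂P := by
        apply integral_mono ((hfint T).sub (integrable_const _)) hI
        intro ω
        exact hup (x T ω)
      rwa [integral_const_mul (L/2) (fun ω => ‖x T ω - xstar‖^2)] at h5
    calc b T ≤ L/2 * a T := h1
      _ ≤ L/2 * ((1 - γ*μ*α)^T * R^2 + α*σ^2/(μ*γ)) := by
          apply mul_le_mul_of_nonneg_left (hiter T) (by positivity)
  -- analysis of the resulting quantity
  set W : ℝ := μ^2*γ^2*R^2*(T : ℝ)/(2*σ^2) with hW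
  have hWe : Real.exp 1 ≤ W := by
    rw [hW, le_div_iff₀ (by positivity)]
    nlinarith [hTe]
  have hWpos : 0 < W := lt_of_lt_of_le (Real.exp_pos 1) hWe
  have hlogW : 1 ≤ Real.log W := by
    calc (1:ℝ) = Real.log (Real.exp 1) := (Real.log_exp 1).symm
      _ ≤ Real.log W := Real.log_le_log (Real.exp_pos 1) hWe
  have hcT : γ*μ*α*(T:ℝ) = Real.log W := by
    rw [hαdef, hW]
    field_simp
  have hpow : (1 - γ*μ*α)^T * R^2 ≤ 2*σ^2/(μ^2*γ^2*(T:ℝ)) := by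
    have h1 : (1 - γ*μ*α) ≤ Real.exp (-(γ*μ*α)) := by
      have := Real.add_one_le_exp (-(γ*μ*α))
      linarith
    have h2 : (1 - γ*μ*α)^T ≤ (Real.exp (-(γ*μ*α)))^T :=
      pow_le_pow_left₀ hc1 h1 T
    have h3 : (Real.exp (-(γ*μ*α)))^T = Real.exp (-(γ*μ*α*(T:ℝ))) := by
      rw [← Real.exp_nat_mul]
      congr 1
      ring
    have h4 : Real.exp (-(γ*μ*α*(T:ℝ))) = W⁻¹ := by
      rw [hcT, Real.exp_neg, Real.exp_log hWpos]
    have h5 : (1 - γ*μ*α)^T ≤ W⁻¹ := by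
      rw [← h4, ← h3]; exact h2
    have h6 : (1 - γ*μ*α)^T * R^2 ≤ W⁻¹ * R^2 :=
      mul_le_mul_of_nonneg_right h5 (sq_nonneg R)
    have h7 : W⁻¹ * R^2 = 2*σ^2/(μ^2*γ^2*(T:ℝ)) := by
      rw [hW]
      field_simp
    linarith
  have hαval : α*σ^2/(μ*γ) = Real.log W * σ^2/(μ^2*γ^2*(T:ℝ)) := by
    rw [hαdef, hW]
    field_simp
  -- relate log W to log s
  set s : ℝ := μ*γ*R*Real.sqrt (T:ℝ)/σ with hs
  have hspos : 0 < s := by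
    have : 0 < Real.sqrt (T:ℝ) := Real.sqrt_pos.mpr hT0
    positivity
  have hs2 : s^2 = 2*W := by
    rw [hs, hW]
    rw [div_pow, mul_pow, mul_pow, Real.sq_sqrt hT0.le]
    field_simp
  have hlogs : Real.log W = 2*Real.log s - Real.log 2 := by
    have : W = s^2/2 := by rw [hs2]; ring
    rw [this, Real.log_div (by positivity) (by norm_num), Real.log_pow]
    push_cast
    ring
  have hlog2 : 0 ≤ Real.log 2 := Real.log_nonneg (by norm_num)
  have hlogWle : Real.log W ≤ 2*Real.log s := by linarith [hlogs]
  -- put everything together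
  have hmain : b T ≤ L*σ^2/(μ^2*γ^2*(T:ℝ)) * (1 + Real.log s) := by
    have h1 : b T ≤ L/2 * (2*σ^2/(μ^2*γ^2*(T:ℝ)) + Real.log W * σ^2/(μ^2*γ^2*(T:ℝ))) := by
      calc b T ≤ L/2 * ((1 - γ*μ*α)^T * R^2 + α*σ^2/(μ*γ)) := hbT
        _ ≤ L/2 * (2*σ^2/(μ^2*γ^2*(T:ℝ)) + Real.log W * σ^2/(μ^2*γ^2*(T:ℝ))) := by
            apply mul_le_mul_of_nonneg_left _ (by positivity)
            rw [hαval] at *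
            linarith [hpow]
      
    have h2 : L/2 * (2*σ^2/(μ^2*γ^2*(T:ℝ)) + Real.log W * σ^2/(μ^2*γ^2*(T:ℝ)))
        ≤ L/2 * (2*σ^2/(μ^2*γ^2*(T:ℝ)) + 2*Real.log s * σ^2/(μ^2*γ^2*(T:ℝ))) := by
      apply mul_le_mul_of_nonneg_left _ (by positivity)
      have hσT : 0 ≤ σ^2/(μ^2*γ^2*(T:ℝ)) := by positivity
      have := mul_le_mul_of_nonneg_right hlogWle (le_of_lt (by positivity : (0:ℝ) < σ^2/(μ^2*γ^2*(T:ℝ))))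
      calc 2*σ^2/(μ^2*γ^2*(T:ℝ)) + Real.log W * σ^2/(μ^2*γ^2*(T:ℝ))
          = 2*σ^2/(μ^2*γ^2*(T:ℝ)) + Real.log W * (σ^2/(μ^2*γ^2*(T:ℝ))) := by ring
        _ ≤ 2*σ^2/(μ^2*γ^2*(T:ℝ)) + 2*Real.log s * (σ^2/(μ^2*γ^2*(T:ℝ))) := by linarith
        _ = 2*σ^2/(μ^2*γ^2*(T:ℝ)) + 2*Real.log s * σ^2/(μ^2*γ^2*(T:ℝ)) := by ring
    have h3 : L/2 * (2*σ^2/(μ^2*γ^2*(T:ℝ)) + 2*Real.log s * σ^2/(μ^2*γ^2*(T:ℝ)))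
        = L*σ^2/(μ^2*γ^2*(T:ℝ)) * (1 + Real.log s) := by
      field_simp
    linarith
  rw [← hbdef T] at *
  rw [one_mul]
  exact hmain

end Main
end
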